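/- Let R be a commutative Noetherian ring and n a non-negative integer. The class of R-modules that are in dimension < n forms a Serre subcategory of the category of R-modules: it is closed under submodules, quotient modules, and extensions. -/

import Mathlib

open CategoryTheory

universe u

/-- Carrier of the `i`-th local cohomology module `H^i_a(M)` with support in `V(a)`. -/
noncomputable def locH (R : Type u) [CommRing R] (a : Ideal R) (i : ℕ)
    (M : Type u) [AddCommGroup M] [Module R M] : ModuleCat R :=
  (localCohomology a i).obj (ModuleCat.of R M)

/-- Krull dimension of the support of a module. -/
noncomputable def dimSupp (R : Type u) [CommRing R]
    (M : Type u) [AddCommGroup M] [Module R M] : WithBot ℕ∞ :=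
  Order.krullDim (Module.support R M)

/-- `f_a^b(M) = inf{i : b^n H^i_a(M) ≠ 0 for all n}`, the `b`-finiteness dimension
of `M` relative to `a` (`inf ∅ = ⊤`). -/
noncomputable def fab (R : Type u) [CommRing R] (a b : Ideal R)
    (M : Type u) [AddCommGroup M] [Module R M] : ℕ∞ :=
  sInf ((↑) '' {i : ℕ |
    ∀ n : ℕ, b ^ n • (⊤ : Submodule R (locH R a i M)) ≠ ⊥})

/-- `f_a^b(M)_n = inf{i : dim Supp (b^t H^i_a(M)) ≥ n for all t}`. -/
noncomputable def fabn (R : Type u) [CommRing R] (a b : Ideal R)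
    (M : Type u) [AddCommGroup M] [Module R M] (n : ℕ) : ℕ∞ :=
  sInf ((↑) '' {i : ℕ |
    ∀ t : ℕ, (n : WithBot ℕ∞) ≤ dimSupp R ↥(b ^ t • (⊤ : Submodule R (locH R a i M)))})

/-- `f_a^b(M)^n = inf{f_{aR_p}^{bR_p}(M_p) : p ∈ Spec R, dim R/p ≥ n}`. -/
noncomputable def fabUpper (R : Type u) [CommRing R] (a b : Ideal R)
    (M : Type u) [AddCommGroup M] [Module R M] (n : ℕ) : ℕ∞ :=
  sInf {d : ℕ∞ | ∃ p : PrimeSpectrum R, (n : WithBot ℕ∞) ≤ ringKrullDim (R ⧸ p.asIdeal) ∧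
    d = fab (Localization.AtPrime p.asIdeal)
      (a.map (algebraMap R (Localization.AtPrime p.asIdeal)))
      (b.map (algebraMap R (Localization.AtPrime p.asIdeal)))
      (LocalizedModule p.asIdeal.primeCompl M)}

/-- `f_a(M) = inf{i : H^i_a(M) is not finitely generated}`, the finiteness dimension. -/
noncomputable def finDim (R : Type u) [CommRing R] (a : Ideal R)
    (M : Type u) [AddCommGroup M] [Module R M] : ℕ∞ :=
  sInf ((↑) '' {i : ℕ | ¬ Module.Finite R (locH R a i M)})

/-- The `i`-th Ext module `Ext^i_R(N, N')`. -/
noncomputable def extMod (R : Type u) [CommRing R] (i : ℕ)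
    (N : Type u) [AddCommGroup N] [Module R N]
    (N' : Type u) [AddCommGroup N'] [Module R N'] : ModuleCat R :=
  ((Ext R (ModuleCat.{u} R) i).obj (Opposite.op (ModuleCat.of R N))).obj (ModuleCat.of R N')

/-- `N` is `b`-cofinite: `Supp N ⊆ V(b)` and `Ext^i_R(R/b, N)` is finitely
generated for all `i ≥ 0`. -/
def IsCofinite (R : Type u) [CommRing R] (b : Ideal R)
    (N : Type u) [AddCommGroup N] [Module R N] : Prop :=
  Module.support R N ⊆ PrimeSpectrum.zeroLocus (b : Set R) ∧
    ∀ i : ℕ, Module.Finite R (extMod R i (R ⧸ b) N)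

/-- `c_a^b(M) = inf{i : H^i_a(M) is not b-cofinite}`, the `b`-cofiniteness dimension. -/
noncomputable def cofDim (R : Type u) [CommRing R] (a b : Ideal R)
    (M : Type u) [AddCommGroup M] [Module R M] : ℕ∞ :=
  sInf ((↑) '' {i : ℕ | ¬ IsCofinite R b (locH R a i M)})

/-- `depth(b, M)`: the supremum of lengths of `M`-regular sequences contained in `b`
(the common length of maximal `M`-regular sequences in `b`). -/
noncomputable def mdepth (R : Type u) [CommRing R] (b : Ideal R)
    (M : Type u) [AddCommGroup M] [Module R M] : ℕ∞ :=
  sSup {d : ℕ∞ | ∃ rs : List R, d = rs.length ∧ (∀ r ∈ rs, r ∈ b) ∧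
    RingTheory.Sequence.IsRegular M rs}

/-- `f_a^n(M) = inf{f_{aR_p}(M_p) : p ∈ Supp(M/aM), dim R/p ≥ n}`. -/
noncomputable def fan (R : Type u) [CommRing R] (a : Ideal R)
    (M : Type u) [AddCommGroup M] [Module R M] (n : ℕ) : ℕ∞ :=
  sInf {d : ℕ∞ | ∃ p : PrimeSpectrum R,
    p ∈ Module.support R (M ⧸ (a • ⊤ : Submodule R M)) ∧
    (n : WithBot ℕ∞) ≤ ringKrullDim (R ⧸ p.asIdeal) ∧
    d = finDim (Localization.AtPrime p.asIdeal)
      (a.map (algebraMap R (Localization.AtPrime p.asIdeal)))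
      (LocalizedModule p.asIdeal.primeCompl M)}

/-- `M` is in dimension `< n`: there is a finitely generated submodule `N ⊆ M`
with `dim Supp (M/N) < n`. -/
def InDimLT (R : Type u) [CommRing R] (n : ℕ)
    (M : Type u) [AddCommGroup M] [Module R M] : Prop :=
  ∃ N : Submodule R M, N.FG ∧ dimSupp R (M ⧸ N) < (n : WithBot ℕ∞)

section orderAux
variable {α : Type*} [Preorder α]

lemma my_krullDim_le_of_subset {s t : Set α} (h : s ⊆ t) :
    Order.krullDim s ≤ Order.krullDim t :=
  Order.krullDim_le_of_strictMono (Set.inclusion h) (fun _ _ hab => hab)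

lemma my_krullDim_union_le {s t : Set α}
    (hs : ∀ ⦃a b : α⦄, a ∈ s → a ≤ b → b ∈ s) (ht : ∀ ⦃a b : α⦄, a ∈ t → a ≤ b → b ∈ t) :
    Order.krullDim ↥(s ∪ t) ≤ max (Order.krullDim s) (Order.krullDim t) := by
  by_cases hne : Nonempty ↥(s ∪ t)
  · refine iSup_le fun p => ?_
    rcases p.head.2 with hh | hh
    · refine le_max_of_le_left ?_
      have hmem : ∀ i, ((p i : ↥(s ∪ t)) : α) ∈ s := fun i =>
        hs hh (Subtype.coe_le_coe.mpr (p.monotone (Fin.zero_le i)))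
      exact Order.LTSeries.length_le_krullDim
        ⟨p.length, fun i => ⟨(p i : α), hmem i⟩, fun i => p.step i⟩
    · refine le_max_of_le_right ?_
      have hmem : ∀ i, ((p i : ↥(s ∪ t)) : α) ∈ t := fun i =>
        ht hh (Subtype.coe_le_coe.mpr (p.monotone (Fin.zero_le i)))
      exact Order.LTSeries.length_le_krullDim
        ⟨p.length, fun i => ⟨(p i : α), hmem i⟩, fun i => p.step i⟩
  · haveI : IsEmpty ↥(s ∪ t) := not_nonempty_iff.mp hne
    rw [Order.krullDim_eq_bot (α := ↥(s ∪ t))]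
    exact bot_le

end orderAux

section moduleAux

variable {R : Type u} [CommRing R]

lemma my_support_specializing (M : Type u) [AddCommGroup M] [Module R M]
    ⦃p q : PrimeSpectrum R⦄ (hp : p ∈ Module.support R M) (hpq : p ≤ q) :
    q ∈ Module.support R M := by
  rw [Module.mem_support_iff_exists_annihilator] at hp ⊢
  obtain ⟨m, hm⟩ := hp
  exact ⟨m, hm.trans ((PrimeSpectrum.asIdeal_le_asIdeal p q).mpr hpq)⟩

lemma my_support_subset_of_exact {M N P : Type u} [AddCommGroup M] [Module R M]
    [AddCommGroup N] [Module R N] [AddCommGroup P] [Module R P]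
    {f : M →ₗ[R] N} {g : N →ₗ[R] P} (h : Function.Exact f g) :
    Module.support R N ⊆ Module.support R M ∪ Module.support R P := by
  intro x
  contrapose
  simp only [Set.mem_union, not_or, and_imp, Module.notMem_support_iff']
  intro H₁ H₂ m
  obtain ⟨r, hr, e₁⟩ := H₂ (g m)
  rw [← map_smul, h] at e₁
  obtain ⟨m', hm'⟩ := e₁
  obtain ⟨s, hs, e₁⟩ := H₁ m'
  exact ⟨_, x.asIdeal.primeCompl.mul_mem hs hr,
    by rw [mul_smul, ← hm', ← map_smul, e₁, map_zero]⟩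

end moduleAux

section moduleAux2
variable {R : Type u} [CommRing R]

lemma my_dimSupp_le_of_injective {M N : Type u} [AddCommGroup M] [Module R M]
    [AddCommGroup N] [Module R N] (f : M →ₗ[R] N) (hf : Function.Injective f) :
    dimSupp R M ≤ dimSupp R N :=
  my_krullDim_le_of_subset (Module.support_subset_of_injective f hf)

lemma my_dimSupp_le_of_surjective {M N : Type u} [AddCommGroup M] [Module R M]
    [AddCommGroup N] [Module R N] (f : M →ₗ[R] N) (hf : Function.Surjective f) :
    dimSupp R N ≤ dimSupp R M :=
  my_krullDim_le_of_subset (Module.support_subset_of_surjective f hf)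

lemma my_dimSupp_lt_of_exact {M N P : Type u} [AddCommGroup M] [Module R M]
    [AddCommGroup N] [Module R N] [AddCommGroup P] [Module R P]
    {f : M →ₗ[R] N} {g : N →ₗ[R] P} (h : Function.Exact f g) {c : WithBot ℕ∞}
    (h1 : dimSupp R M < c) (h2 : dimSupp R P < c) : dimSupp R N < c := by
  refine lt_of_le_of_lt ((my_krullDim_le_of_subset (my_support_subset_of_exact h)).trans
    (my_krullDim_union_le (my_support_specializing M) (my_support_specializing P))) ?_
  exact max_lt h1 h2

lemma my_fg_inf [IsNoetherianRing R] {M : Type u} [AddCommGroup M] [Module R M]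
    {N : Submodule R M} (hN : N.FG) (K : Submodule R M) : (N ⊓ K).FG := by
  haveI : Module.Finite R ↥N := Module.Finite.iff_fg.mpr hN
  have h := IsNoetherian.noetherian (Submodule.comap N.subtype K)
  have h2 := h.map N.subtype
  rwa [Submodule.map_comap_subtype] at h2

end moduleAux2

/-- the class of modules in dimension `< n` is a Serre subcategory:
closed under submodules, quotients, and extensions. -/
theorem inDimLT_serre (R : Type u) [CommRing R] [IsNoetherianRing R] (n : ℕ) :
    (∀ (M : Type u) [AddCommGroup M] [Module R M] (N : Submodule R M),
      InDimLT R n M → InDimLT R n N) ∧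
    (∀ (M : Type u) [AddCommGroup M] [Module R M] (N : Submodule R M),
      InDimLT R n M → InDimLT R n (M ⧸ N)) ∧
    (∀ (M : Type u) [AddCommGroup M] [Module R M] (N : Submodule R M),
      InDimLT R n N → InDimLT R n (M ⧸ N) → InDimLT R n M) := by
  refine ⟨?_, ?_, ?_⟩
  · -- submodules
    rintro M _ _ K ⟨N, hNfg, hNd⟩
    refine ⟨Submodule.comap K.subtype N, ?_, ?_⟩
    · apply Submodule.fg_of_fg_map_injective K.subtype K.injective_subtype
      rw [Submodule.map_comap_subtype]
      rw [inf_comm]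
      exact my_fg_inf hNfg K
    · set f := N.mkQ.comp K.subtype with hf
      have hker : Submodule.comap K.subtype N = LinearMap.ker f := by
        ext x
        simp [hf, Submodule.Quotient.mk_eq_zero]
      refine lt_of_le_of_lt
        (my_dimSupp_le_of_injective ((Submodule.comap K.subtype N).liftQ f hker.le) ?_) hNd
      rw [← LinearMap.ker_eq_bot]
      exact Submodule.ker_liftQ_eq_bot' _ _ hker
  · -- quotients
    rintro M _ _ K ⟨N, hNfg, hNd⟩
    refine ⟨N.map K.mkQ, hNfg.map _, ?_⟩
    set g := (N.map K.mkQ).mkQ.comp K.mkQ with hg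
    have hle : N ≤ LinearMap.ker g := fun x hx => by
      simp only [hg, LinearMap.mem_ker, LinearMap.comp_apply, Submodule.mkQ_apply,
        Submodule.Quotient.mk_eq_zero]
      exact Submodule.mem_map_of_mem hx
    refine lt_of_le_of_lt (my_dimSupp_le_of_surjective (N.liftQ g hle) ?_) hNd
    have hsurj : Function.Surjective g :=
      ((N.map K.mkQ).mkQ_surjective).comp K.mkQ_surjective
    have hcomp : (N.liftQ g hle).comp N.mkQ = g := N.liftQ_mkQ g hle
    intro y
    obtain ⟨x, hx⟩ := hsurj y
    exact ⟨N.mkQ x, (LinearMap.congr_fun hcomp x).trans hx⟩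
  · -- extensions
    rintro M _ _ K ⟨N₁, hN₁fg, hN₁d⟩ ⟨Q₁, hQ₁fg, hQ₁d⟩
    obtain ⟨S, hS⟩ := hQ₁fg
    choose lift hlift using K.mkQ_surjective
    set L := Submodule.span R (lift '' ↑S) with hL
    have hLfg : L.FG := Submodule.fg_span ((S.finite_toSet.image _))
    have hLmap : L.map K.mkQ = Q₁ := by
      rw [hL, Submodule.map_span, Set.image_image]
      simp only [hlift]
      rw [Set.image_id', hS]
    set K' := N₁.map K.subtype ⊔ L with hK'
    refine ⟨K', (hN₁fg.map _).sup hLfg, ?_⟩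
    -- the map f' : K⧸N₁ → M⧸K'
    set f := K'.mkQ.comp K.subtype with hfdef
    have hfN₁ : N₁ ≤ LinearMap.ker f := fun x hx => by
      simp only [hfdef, LinearMap.mem_ker, LinearMap.comp_apply, Submodule.mkQ_apply,
        Submodule.Quotient.mk_eq_zero]
      exact le_sup_left (α := Submodule R M) (Submodule.mem_map_of_mem hx)
    set f' := N₁.liftQ f hfN₁ with hf'
    -- the map g : M⧸K' → (M⧸K)⧸Q₁
    have hK'ker : K' ≤ LinearMap.ker (Q₁.mkQ.comp K.mkQ) := by
      rw [hK']
      refine sup_le ?_ ?_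
      · rintro x ⟨k, hk, rfl⟩
        simp [Submodule.Quotient.mk_eq_zero, (Submodule.Quotient.mk_eq_zero K).mpr k.2]
      · intro x hx
        simp only [LinearMap.mem_ker, LinearMap.comp_apply, Submodule.mkQ_apply,
          Submodule.Quotient.mk_eq_zero]
        rw [← hLmap]
        exact Submodule.mem_map_of_mem hx
    set g := K'.liftQ (Q₁.mkQ.comp K.mkQ) hK'ker with hgdef
    have hexact : Function.Exact f' g := by
      rw [LinearMap.exact_iff]
      have hkerg : LinearMap.ker g = (LinearMap.ker (Q₁.mkQ.comp K.mkQ)).map K'.mkQ :=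
        Submodule.ker_liftQ _ _ _
      have hker2 : LinearMap.ker (Q₁.mkQ.comp K.mkQ) = K ⊔ L := by
        rw [LinearMap.ker_comp, Submodule.ker_mkQ, ← hLmap, Submodule.comap_map_mkQ]
      have hrange : LinearMap.range f' = LinearMap.range f := Submodule.range_liftQ _ _ _
      rw [hkerg, hker2, hrange, hfdef, LinearMap.range_comp, Submodule.range_subtype,
        Submodule.map_sup]
      have hLbot : L.map K'.mkQ = ⊥ := by
        rw [← le_bot_iff]
        rintro x ⟨l, hl, rfl⟩
        simpa [Submodule.Quotient.mk_eq_zero] using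
          le_sup_right (α := Submodule R M) (a := N₁.map K.subtype) hl
      rw [hLbot, sup_bot_eq]
    exact my_dimSupp_lt_of_exact hexact hN₁d hQ₁d
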